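/- Let S be a finite p-group of nilpotency class two, let T be a normal subgroup of S which decomposes as an internal direct product T = T₁ × ⋯ × Tₙ where each Tᵢ is non-abelian of nilpotency class two, and suppose s ∈ S permutes the set {T₁, …, Tₙ} by conjugation. Then s normalizes each Tᵢ. -/

import Mathlib

open scoped commutatorElement
/-- Let `S` be a finite `p`-group of nilpotency class two, let `T ⊴ S`
decompose as an internal direct product of subgroups `Tᵢ`, each non-abelian of class two,
and suppose `s ∈ S` permutes the set of the `Tᵢ` by conjugation. Then `s` normalizes
each `Tᵢ`. -/
theorem stmt_0 {p : ℕ} (hp : p.Prime) {S : Type*} [Group S] [Finite S]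
    (hpS : IsPGroup p S)
    (hclass2 : commutator S ≤ Subgroup.center S) (hnonab : commutator S ≠ ⊥)
    {n : ℕ} (T : Subgroup S) (hT : T.Normal) (Ti : Fin n → Subgroup S)
    (hsup : (⨆ i, Ti i) = T)
    (hindep : iSupIndep Ti)
    (hcommuting : ∀ i j, i ≠ j → ∀ x ∈ Ti i, ∀ y ∈ Ti j, Commute x y)
    (hTi_nonab : ∀ i, ¬ (∀ x ∈ Ti i, ∀ y ∈ Ti i, Commute x y))
    (hTi_class2 : ∀ i, ⁅Ti i, Ti i⁆ ≤ Subgroup.centralizer (Ti i : Set S) ⊓ Ti i)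
    (s : S)
    (hperm : ∀ i, ∃ j, Subgroup.map (MulAut.conj s).toMonoidHom (Ti i) = Ti j) :
    ∀ i, Subgroup.map (MulAut.conj s).toMonoidHom (Ti i) = Ti i := by
  intro i
  obtain ⟨j, hj⟩ := hperm i
  rcases eq_or_ne j i with rfl | hne
  · exact hj
  · exfalso
    push_neg at hTi_nonab
    obtain ⟨x, hx, y, hy, hxy⟩ := hTi_nonab i
    -- s x s⁻¹ ∈ Tj
    have hsx : s * x * s⁻¹ ∈ Ti j := by
      rw [← hj]
      exact ⟨x, hx, rfl⟩
    -- commutator ⁅s, x⁆ is central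
    have hz : ⁅s, x⁆ ∈ Subgroup.center S := by
      apply hclass2
      rw [commutator_def]
      exact Subgroup.commutator_mem_commutator (Subgroup.mem_top s) (Subgroup.mem_top x)
    have hcomm : Commute (s * x * s⁻¹) y := hcommuting j i hne _ hsx y hy
    have hrw : s * x * s⁻¹ = ⁅s, x⁆ * x := by
      simp [commutatorElement_def, mul_assoc]
    rw [hrw] at hcomm
    have hzy : Commute (⁅s, x⁆) y := ((Subgroup.mem_center_iff.mp hz) y).symm
    have : Commute (⁅s, x⁆⁻¹ * (⁅s, x⁆ * x)) y := hzy.inv_left.mul_left hcomm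
    rw [inv_mul_cancel_left] at this
    exact hxy this
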